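/- Let n ≥ 3, T ⊆ [-1,1), h : ℝ → ℝ, and let f be a real polynomial such that (i) f(t) ≤ h(t) for every t ∈ [-1,1] \ T, and (ii) for every finite set B ⊆ S^{n-1} one has ∑_{x,y∈B} f(⟨x,y⟩) ≥ f₀·|B|² (this encodes that all Gegenbauer coefficients f_i, i ≥ 1, of f are nonnegative). Then for every finite T-avoiding code C ⊆ S^{n-1} (with |C| ≥ 2), one has E^h(C) ≥ f₀·|C| − f(1). -/

import Mathlib

open MeasureTheory Finset
open scoped Classical

/-- The normalized surface measure on the unit sphere of `EuclideanSpace ℝ (Fin n)`. -/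
noncomputable def normSphereMeasure (n : ℕ) :
    Measure (Metric.sphere (0 : EuclideanSpace ℝ (Fin n)) 1) :=
  ((volume : Measure (EuclideanSpace ℝ (Fin n))).toSphere Set.univ)⁻¹ •
    (volume : Measure (EuclideanSpace ℝ (Fin n))).toSphere

/-- `C` is a spherical `τ`-design: every polynomial in `n` variables of total degree at
most `τ` has average over `C` equal to its average over the sphere. -/
def IsSphericalDesign (n τ : ℕ) (C : Finset (EuclideanSpace ℝ (Fin n))) : Prop :=
  ∀ p : MvPolynomial (Fin n) ℝ, p.totalDegree ≤ τ →
    (1 / (C.card : ℝ)) * ∑ x ∈ C, MvPolynomial.eval (fun i => x i) p =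
      ∫ x, MvPolynomial.eval (fun i => (x : EuclideanSpace ℝ (Fin n)) i) p
        ∂(normSphereMeasure n)

/-- The discrete `h`-energy of a code `C`. -/
noncomputable def energy (n : ℕ) (h : ℝ → ℝ) (C : Finset (EuclideanSpace ℝ (Fin n))) : ℝ :=
  (1 / (C.card : ℝ)) *
    ∑ x ∈ C, ∑ y ∈ C, if x ≠ y then h (inner ℝ x y : ℝ) else 0

/-- The zeroth Gegenbauer coefficient (mean value) of a polynomial `f` in dimension `n`. -/
noncomputable def gegenbauerZero (n : ℕ) (f : Polynomial ℝ) : ℝ :=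
  (Real.Gamma ((n : ℝ) / 2) / (Real.sqrt Real.pi * Real.Gamma (((n : ℝ) - 1) / 2))) *
    ∫ t in (-1 : ℝ)..1, f.eval t * (1 - t ^ 2) ^ (((n : ℝ) - 3) / 2)

theorem lower_LP_bound_for_codes (n : ℕ) (hn : 3 ≤ n)
    (T : Set ℝ) (hT : T ⊆ Set.Ico (-1 : ℝ) 1)
    (h : ℝ → ℝ) (f : Polynomial ℝ)
    (hfh : ∀ t ∈ Set.Icc (-1 : ℝ) 1 \ T, f.eval t ≤ h t)
    (hfpd : ∀ B : Finset (EuclideanSpace ℝ (Fin n)), (∀ x ∈ B, ‖x‖ = 1) →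
      ∑ x ∈ B, ∑ y ∈ B, f.eval (inner ℝ x y : ℝ) ≥ gegenbauerZero n f * (B.card : ℝ) ^ 2)
    (C : Finset (EuclideanSpace ℝ (Fin n)))
    (hCsphere : ∀ x ∈ C, ‖x‖ = 1) (hCcard : 2 ≤ C.card)
    (hCavoid : ∀ x ∈ C, ∀ y ∈ C, x ≠ y → (inner ℝ x y : ℝ) ∉ T) :
    energy n h C ≥ gegenbauerZero n f * C.card - f.eval 1 := by
  have hcpos : (0:ℝ) < C.card := by
    have : (0:ℕ) < C.card := lt_of_lt_of_le (by norm_num) hCcard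
    exact_mod_cast this
  -- split the f double sum into diagonal and off-diagonal
  have hsplit : ∀ x ∈ C, ∀ y ∈ C,
      f.eval (inner ℝ x y : ℝ) =
        (if x ≠ y then f.eval (inner ℝ x y : ℝ) else 0) + (if x = y then f.eval 1 else 0) := by
    intro x hx y hy
    by_cases hxy : x = y
    · subst hxy
      have h1 : (inner ℝ x x : ℝ) = 1 := by
        rw [real_inner_self_eq_norm_sq, hCsphere x hx]; norm_num
      simp [h1, hCsphere x hx]
    · simp [hxy]
  have hfd := hfpd C hCsphere
  have hsum : ∑ x ∈ C, ∑ y ∈ C, f.eval (inner ℝ x y : ℝ) =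
      (∑ x ∈ C, ∑ y ∈ C, if x ≠ y then f.eval (inner ℝ x y : ℝ) else 0)
        + C.card * f.eval 1 := by
    calc ∑ x ∈ C, ∑ y ∈ C, f.eval (inner ℝ x y : ℝ)
        = ∑ x ∈ C, ∑ y ∈ C, ((if x ≠ y then f.eval (inner ℝ x y : ℝ) else 0)
            + (if x = y then f.eval 1 else 0)) :=
          Finset.sum_congr rfl (fun x hx => Finset.sum_congr rfl (fun y hy => hsplit x hx y hy))
      _ = (∑ x ∈ C, ∑ y ∈ C, if x ≠ y then f.eval (inner ℝ x y : ℝ) else 0)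
            + ∑ x ∈ C, ∑ y ∈ C, (if x = y then f.eval 1 else 0) := by
          simp [Finset.sum_add_distrib]
      _ = (∑ x ∈ C, ∑ y ∈ C, if x ≠ y then f.eval (inner ℝ x y : ℝ) else 0)
            + C.card * f.eval 1 := by
          congr 1
          have hrow : ∀ x ∈ C, (∑ y ∈ C, if x = y then f.eval 1 else 0) = f.eval 1 := by
            intro x hx
            rw [Finset.sum_ite_eq C x (fun _ => f.eval 1)]
            simp [hx]
          rw [Finset.sum_congr rfl hrow, Finset.sum_const, nsmul_eq_mul]
  -- off-diagonal f sum bound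
  have hoff : (∑ x ∈ C, ∑ y ∈ C, if x ≠ y then f.eval (inner ℝ x y : ℝ) else 0)
      ≥ gegenbauerZero n f * (C.card : ℝ) ^ 2 - C.card * f.eval 1 := by
    have := hfd
    rw [hsum] at this
    linarith
  -- h dominates f on off-diagonal terms
  have hdom : (∑ x ∈ C, ∑ y ∈ C, if x ≠ y then h (inner ℝ x y : ℝ) else 0)
      ≥ (∑ x ∈ C, ∑ y ∈ C, if x ≠ y then f.eval (inner ℝ x y : ℝ) else 0) := by
    apply Finset.sum_le_sum
    intro x hx
    apply Finset.sum_le_sum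
    intro y hy
    by_cases hxy : x = y
    · simp [hxy]
    · simp only [hxy, Ne, not_false_iff, if_true]
      apply hfh
      constructor
      · have h1 : |(inner ℝ x y : ℝ)| ≤ 1 := by
          have := abs_real_inner_le_norm x y
          rw [hCsphere x hx, hCsphere y hy] at this
          simpa using this
        exact abs_le.mp h1
      · exact hCavoid x hx y hy hxy
  have key : (∑ x ∈ C, ∑ y ∈ C, if x ≠ y then h (inner ℝ x y : ℝ) else 0)
      ≥ gegenbauerZero n f * (C.card : ℝ) ^ 2 - C.card * f.eval 1 := le_trans hoff hdom
  unfold energy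
  rw [ge_iff_le, ← sub_nonneg]
  have expand : 1 / (C.card : ℝ) *
      (∑ x ∈ C, ∑ y ∈ C, if x ≠ y then h (inner ℝ x y : ℝ) else 0)
      - (gegenbauerZero n f * C.card - f.eval 1)
      = (1 / (C.card : ℝ)) *
        ((∑ x ∈ C, ∑ y ∈ C, if x ≠ y then h (inner ℝ x y : ℝ) else 0)
          - (gegenbauerZero n f * (C.card : ℝ) ^ 2 - C.card * f.eval 1)) := by
    field_simp
  rw [expand]
  apply mul_nonneg (by positivity)
  linarith
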